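/- Let p, q ≥ 1, let μ be a probability vector on Fin p and ν a probability vector on Fin q satisfying p·(min_u μ_u) + q·(min_v ν_v) ≥ 1. Define π⁺_{u,v} = μ_u/q + ν_v/p − 1/(p·q). Then: (i) π⁺_{u,v} ≥ 0 for all u, v; (ii) π⁺ is a coupling of μ and ν; (iii) for every coupling π of μ and ν, Σ_{u,v} (π_{u,v} − 1/(p·q))² ≥ Σ_{u,v} (π⁺_{u,v} − 1/(p·q))², with equality if and only if π = π⁺. In other words, the indetermination coupling π⁺ is the unique minimizer of the squared-deviation cost among all couplings of μ and ν. -/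

import Mathlib

/-- Under the positivity condition `p·(min μ) + q·(min ν) ≥ 1`, the
indetermination matrix `π⁺_{u,v} = μ_u/q + ν_v/p − 1/(pq)` is nonnegative, is a
coupling of `μ` and `ν`, and is the unique minimizer of the squared-deviation
cost `Σ (π_{u,v} − 1/(pq))²` among all couplings of `μ` and `ν`. -/
theorem indetermination_unique_minimizer_square_cost
    (p q : ℕ) (hp : 0 < p) (hq : 0 < q)
    (μ : Fin p → ℝ) (ν : Fin q → ℝ)
    (hμnonneg : ∀ u, 0 ≤ μ u) (hνnonneg : ∀ v, 0 ≤ ν v)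
    (hμsum : ∑ u, μ u = 1) (hνsum : ∑ v, ν v = 1)
    (hcond : 1 ≤ (p : ℝ) * Finset.univ.inf' ⟨⟨0, hp⟩, Finset.mem_univ _⟩ μ
               + (q : ℝ) * Finset.univ.inf' ⟨⟨0, hq⟩, Finset.mem_univ _⟩ ν) :
    (∀ u v, 0 ≤ μ u / (q : ℝ) + ν v / (p : ℝ) - 1 / ((p : ℝ) * (q : ℝ))) ∧
    (∀ u, ∑ v, (μ u / (q : ℝ) + ν v / (p : ℝ) - 1 / ((p : ℝ) * (q : ℝ))) = μ u) ∧
    (∀ v, ∑ u, (μ u / (q : ℝ) + ν v / (p : ℝ) - 1 / ((p : ℝ) * (q : ℝ))) = ν v) ∧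
    (∀ π : Fin p → Fin q → ℝ,
      (∀ u v, 0 ≤ π u v) →
      (∀ u, ∑ v, π u v = μ u) →
      (∀ v, ∑ u, π u v = ν v) →
      ((∑ u, ∑ v, (π u v - 1 / ((p : ℝ) * (q : ℝ)))^2
          ≥ ∑ u, ∑ v, ((μ u / (q : ℝ) + ν v / (p : ℝ) - 1 / ((p : ℝ) * (q : ℝ)))
              - 1 / ((p : ℝ) * (q : ℝ)))^2) ∧
       ((∑ u, ∑ v, (π u v - 1 / ((p : ℝ) * (q : ℝ)))^2
          = ∑ u, ∑ v, ((μ u / (q : ℝ) + ν v / (p : ℝ) - 1 / ((p : ℝ) * (q : ℝ)))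
              - 1 / ((p : ℝ) * (q : ℝ)))^2)
          ↔ ∀ u v, π u v = μ u / (q : ℝ) + ν v / (p : ℝ) - 1 / ((p : ℝ) * (q : ℝ))))) := by
  have hpR : (0:ℝ) < p := by exact_mod_cast hp
  have hqR : (0:ℝ) < q := by exact_mod_cast hq
  -- (i) nonnegativity
  have hnn : ∀ u v, 0 ≤ μ u / (q : ℝ) + ν v / (p : ℝ) - 1 / ((p : ℝ) * (q : ℝ)) := by
    intro u v
    have h1 : Finset.univ.inf' ⟨⟨0, hp⟩, Finset.mem_univ _⟩ μ ≤ μ u :=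
      Finset.inf'_le _ (Finset.mem_univ u)
    have h2 : Finset.univ.inf' ⟨⟨0, hq⟩, Finset.mem_univ _⟩ ν ≤ ν v :=
      Finset.inf'_le _ (Finset.mem_univ v)
    have hnum : (1:ℝ) ≤ (p:ℝ) * μ u + (q:ℝ) * ν v := by nlinarith
    have key : μ u / (q : ℝ) + ν v / (p : ℝ) - 1 / ((p : ℝ) * (q : ℝ))
        = ((p:ℝ) * μ u + (q:ℝ) * ν v - 1) / ((p:ℝ) * (q:ℝ)) := by
      field_simp
    rw [key]
    apply div_nonneg (by linarith) (by positivity)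
  -- (ii) marginals
  have hrow : ∀ u, ∑ v, (μ u / (q : ℝ) + ν v / (p : ℝ) - 1 / ((p : ℝ) * (q : ℝ))) = μ u := by
    intro u
    rw [Finset.sum_sub_distrib, Finset.sum_add_distrib, Finset.sum_const, Finset.sum_const,
      ← Finset.sum_div, hνsum, Finset.card_univ, Fintype.card_fin]
    field_simp
    have h1 : (q:ℝ) * (q:ℝ)⁻¹ = 1 := mul_inv_cancel₀ hqR.ne'
    have h2 : (p:ℝ) * (p:ℝ)⁻¹ = 1 := mul_inv_cancel₀ hpR.ne'
    linear_combination (μ u * (p:ℝ) - (p:ℝ) * (p:ℝ)⁻¹) * h1 - h2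
  have hcol : ∀ v, ∑ u, (μ u / (q : ℝ) + ν v / (p : ℝ) - 1 / ((p : ℝ) * (q : ℝ))) = ν v := by
    intro v
    rw [Finset.sum_sub_distrib, Finset.sum_add_distrib, Finset.sum_const, Finset.sum_const,
      ← Finset.sum_div, hμsum, Finset.card_univ, Fintype.card_fin]
    field_simp; have h1 : (q:ℝ) * (q:ℝ)⁻¹ = 1 := mul_inv_cancel₀ hqR.ne'
    have h2 : (p:ℝ) * (p:ℝ)⁻¹ = 1 := mul_inv_cancel₀ hpR.ne'
    linear_combination ((q:ℝ) * ν v - (q:ℝ) * (q:ℝ)⁻¹) * h2 - h1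
  refine ⟨hnn, hrow, hcol, ?_⟩
  intro π hπnn hπrow hπcol
  set c : ℝ := 1 / ((p : ℝ) * (q : ℝ)) with hc
  set P : Fin p → Fin q → ℝ := fun u v => μ u / (q : ℝ) + ν v / (p : ℝ) - c with hP
  set D : Fin p → Fin q → ℝ := fun u v => π u v - P u v with hD
  have hDrow : ∀ u, ∑ v, D u v = 0 := by
    intro u
    simp only [hD, hP, Finset.sum_sub_distrib, hπrow u, hrow u, sub_self]
  have hDcol : ∀ v, ∑ u, D u v = 0 := by
    intro v
    simp only [hD, hP, Finset.sum_sub_distrib, hπcol v, hcol v, sub_self]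
  have cross : ∑ u, ∑ v, D u v * (P u v - c) = 0 := by
    have expand : ∀ u v, D u v * (P u v - c)
        = D u v * (μ u / (q:ℝ) - c) + D u v * (ν v / (p:ℝ) - c) := by
      intro u v; simp only [hP]; ring
    calc ∑ u, ∑ v, D u v * (P u v - c)
        = (∑ u, ∑ v, D u v * (μ u / (q:ℝ) - c)) + ∑ u, ∑ v, D u v * (ν v / (p:ℝ) - c) := by
          rw [← Finset.sum_add_distrib]
          refine Finset.sum_congr rfl fun u _ => ?_
          rw [← Finset.sum_add_distrib]
          exact Finset.sum_congr rfl fun v _ => expand u v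
      _ = 0 := by
          have h1 : ∑ u, ∑ v, D u v * (μ u / (q:ℝ) - c) = 0 := by
            refine Finset.sum_eq_zero fun u _ => ?_
            rw [← Finset.sum_mul, hDrow u, zero_mul]
          have h2 : ∑ u, ∑ v, D u v * (ν v / (p:ℝ) - c) = 0 := by
            rw [Finset.sum_comm]
            refine Finset.sum_eq_zero fun v _ => ?_
            rw [← Finset.sum_mul, hDcol v, zero_mul]
          rw [h1, h2, add_zero]
  have decomp : ∑ u, ∑ v, (π u v - c)^2
      = (∑ u, ∑ v, (D u v)^2) + ∑ u, ∑ v, (P u v - c)^2 := by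
    have e : ∀ u v, (π u v - c)^2
        = (D u v)^2 + 2 * (D u v * (P u v - c)) + (P u v - c)^2 := by
      intro u v; simp only [hD]; ring
    have expand : ∑ u, ∑ v, (π u v - c)^2
        = (∑ u, ∑ v, (D u v)^2) + 2 * (∑ u, ∑ v, D u v * (P u v - c))
            + ∑ u, ∑ v, (P u v - c)^2 := by
      simp only [Finset.mul_sum, ← Finset.sum_add_distrib]
      exact Finset.sum_congr rfl fun u _ => Finset.sum_congr rfl fun v _ => e u v
    rw [expand, cross]; ring
  have hDsq_nonneg : 0 ≤ ∑ u, ∑ v, (D u v)^2 :=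
    Finset.sum_nonneg fun u _ => Finset.sum_nonneg fun v _ => sq_nonneg _
  constructor
  · rw [decomp]; linarith
  · constructor
    · intro heq
      have hzero : ∑ u, ∑ v, (D u v)^2 = 0 := by rw [decomp] at heq; linarith
      intro u v
      have h1 := (Finset.sum_eq_zero_iff_of_nonneg
        (fun u _ => Finset.sum_nonneg fun v _ => sq_nonneg (D u v))).mp hzero u
        (Finset.mem_univ u)
      have h2 := (Finset.sum_eq_zero_iff_of_nonneg
        (fun v _ => sq_nonneg (D u v))).mp h1 v (Finset.mem_univ v)
      have : D u v = 0 := by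
        have := sq_eq_zero_iff.mp h2
        exact this
      have : π u v = P u v := by simpa [hD, sub_eq_zero] using this
      simpa [hP] using this
    · intro hpi
      rw [decomp]
      have : ∑ u, ∑ v, (D u v)^2 = 0 := by
        refine Finset.sum_eq_zero fun u _ => Finset.sum_eq_zero fun v _ => ?_
        have : D u v = 0 := by simp only [hD, hP]; rw [hpi u v]; ring
        rw [this]; ring
      rw [this, zero_add]
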